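/- Let A = {(x,y) : x,y ∈ ℤ²_{≥0}, det(x,y) = 1}. Then Σ_{(x,y)∈A} (|x| + |y| - |x+y|)² = 2 - π/2. -/

import Mathlib

open Real

namespace S9

abbrev P := (ℤ × ℤ) × (ℤ × ℤ)

def A (p : P) : Prop :=
  0 ≤ p.1.1 ∧ 0 ≤ p.1.2 ∧ 0 ≤ p.2.1 ∧ 0 ≤ p.2.2 ∧ p.1.1 * p.2.2 - p.1.2 * p.2.1 = 1

def Lst (p : P) : P := (p.1, (p.1.1 + p.2.1, p.1.2 + p.2.2))
def Rst (p : P) : P := ((p.1.1 + p.2.1, p.1.2 + p.2.2), p.2)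
def stp (b : Bool) (p : P) : P := bif b then Lst p else Rst p

def root : P := ((1, 0), (0, 1))

lemma A_root : A root := by constructor <;> norm_num [root]

lemma A_L {p : P} (h : A p) : A (Lst p) := by
  obtain ⟨h1, h2, h3, h4, h5⟩ := h
  refine ⟨h1, h2, by simp only [Lst]; omega, by simp only [Lst]; omega, ?_⟩
  simp only [Lst]; ring_nf; linarith [h5]

lemma A_R {p : P} (h : A p) : A (Rst p) := by
  obtain ⟨h1, h2, h3, h4, h5⟩ := h
  refine ⟨by simp only [Rst]; omega, by simp only [Rst]; omega, h3, h4, ?_⟩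
  simp only [Rst]; ring_nf; linarith [h5]

lemma A_stp {p : P} (b : Bool) (h : A p) : A (stp b p) := by
  cases b
  · exact A_R h
  · exact A_L h

lemma x_ne_zero {p : P} (h : A p) : 1 ≤ p.1.1 + p.1.2 := by
  obtain ⟨h1, h2, h3, h4, h5⟩ := h
  rcases lt_or_ge 0 (p.1.1 + p.1.2) with h | h
  · omega
  · exfalso; have : p.1.1 = 0 ∧ p.1.2 = 0 := by omega
    rw [this.1, this.2] at h5; simp at h5

lemma y_ne_zero {p : P} (h : A p) : 1 ≤ p.2.1 + p.2.2 := by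
  obtain ⟨h1, h2, h3, h4, h5⟩ := h
  rcases lt_or_ge 0 (p.2.1 + p.2.2) with h | h
  · omega
  · exfalso; have : p.2.1 = 0 ∧ p.2.2 = 0 := by omega
    rw [this.1, this.2] at h5; simp at h5


-- arctan lemmas standalone

lemma arctan_le_self {x : ℝ} (hx : 0 ≤ x) : Real.arctan x ≤ x := by
  rcases eq_or_lt_of_le hx with h | h
  · simp [← h]
  · have : Real.tan (Real.arctan x) = x := Real.tan_arctan x
    have hpos : 0 < Real.arctan x := by
      rw [← Real.arctan_zero]
      exact Real.arctan_strictMono h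
    nlinarith [Real.lt_tan (x := Real.arctan x) hpos (Real.arctan_lt_pi_div_two x), this]

lemma sub_arctan_le_cube {x : ℝ} (hx : 0 ≤ x) : x - Real.arctan x ≤ x ^ 3 / 3 := by
  set F : ℝ → ℝ := fun t => t ^ 3 / 3 - t + Real.arctan t with hF
  have hd : ∀ t : ℝ, HasDerivAt F (t ^ 2 - 1 + 1 / (1 + t ^ 2)) t := by
    intro t
    have h1 : HasDerivAt (fun t : ℝ => t ^ 3 / 3 - t) (t ^ 2 - 1) t := by
      have := ((hasDerivAt_pow 3 t).div_const 3).sub (hasDerivAt_id t)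
      simpa [Pi.sub_def] using this
    simpa [Pi.add_def] using h1.add (Real.hasDerivAt_arctan t)
  have hmono : Monotone F := by
    apply monotone_of_deriv_nonneg
    · intro t; exact (hd t).differentiableAt
    · intro t
      rw [(hd t).deriv]
      have h2 : (0:ℝ) < 1 + t ^ 2 := by positivity
      have : t ^ 2 - 1 + 1 / (1 + t ^ 2) = t ^ 4 / (1 + t ^ 2) := by
        field_simp; ring
      rw [this]; positivity
  have h0 : F 0 = 0 := by simp [hF]
  have := hmono hx
  rw [h0] at this
  simp only [hF] at this
  linarith

-- key: 2 arctan (sqrt(1+d^2) - d) = pi/2 - arctan d  for d ≥ 0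
lemma two_arctan_u {d : ℝ} (hd : 0 ≤ d) :
    2 * Real.arctan (Real.sqrt (1 + d ^ 2) - d) = π / 2 - Real.arctan d := by
  set u : ℝ := Real.sqrt (1 + d ^ 2) - d with hu
  have hsq : Real.sqrt (1 + d ^ 2) ^ 2 = 1 + d ^ 2 := Real.sq_sqrt (by positivity)
  have hu0 : 0 < u := by
    have : d < Real.sqrt (1 + d ^ 2) := by
      nlinarith [Real.sqrt_nonneg (1 + d ^ 2)]
    linarith
  have hueq : u ^ 2 + 2 * d * u = 1 := by
    simp only [hu]; nlinarith [hsq]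
  rcases eq_or_lt_of_le hd with h | h
  · -- d = 0, u = 1
    have hu1 : u = 1 := by nlinarith
    rw [hu1, ← h]
    rw [Real.arctan_one, Real.arctan_zero]
    ring
  · have hu1 : u < 1 := by nlinarith
    have := Real.two_mul_arctan (by linarith : -1 < u) hu1
    rw [this]
    have h1u : 1 - u ^ 2 = 2 * d * u := by linarith
    have : 2 * u / (1 - u ^ 2) = 1 / d := by
      rw [h1u]; field_simp
    rw [this, one_div, Real.arctan_inv_of_pos h]

-- arctan d1 + arctan d2 = pi/2 + arctan d when d1 d2 = 1 + d(d1+d2), all pos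
lemma arctan_add_special {d d1 d2 : ℝ} (hd : 0 ≤ d) (h1 : 0 < d1) (h2 : 0 < d2)
    (he : d1 * d2 = 1 + d * (d1 + d2)) :
    Real.arctan d1 + Real.arctan d2 = π / 2 + Real.arctan d := by
  rcases eq_or_lt_of_le hd with h | h
  · -- d = 0 : d1 d2 = 1
    have hd2 : d2 = d1⁻¹ := by
      field_simp
      nlinarith
    rw [hd2, Real.arctan_inv_of_pos h1, ← h, Real.arctan_zero]
    ring
  · have hgt : 1 < d1 * d2 := by nlinarith
    rw [Real.arctan_add_eq_add_pi hgt h1]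
    have hne : 1 - d1 * d2 = -(d * (d1 + d2)) := by linarith
    have : (d1 + d2) / (1 - d1 * d2) = -(1/d) := by
      rw [hne]
      field_simp
    rw [this, Real.arctan_neg, one_div, Real.arctan_inv_of_pos h]
    ring


noncomputable def nrm (v : ℤ × ℤ) : ℝ := Real.sqrt ((v.1 : ℝ) ^ 2 + (v.2 : ℝ) ^ 2)
noncomputable def dt (p : P) : ℝ := (p.1.1 : ℝ) * (p.2.1 : ℝ) + (p.1.2 : ℝ) * (p.2.2 : ℝ)
noncomputable def uu (p : P) : ℝ := Real.sqrt (1 + dt p ^ 2) - dt p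
noncomputable def hh (p : P) : ℝ := 2 * uu p
noncomputable def th (p : P) : ℝ := 2 * Real.arctan (uu p)
noncomputable def ff (p : P) : ℝ :=
  (nrm p.1 + nrm p.2 - Real.sqrt (((p.1.1 : ℝ) + (p.2.1 : ℝ)) ^ 2 + ((p.1.2 : ℝ) + (p.2.2 : ℝ)) ^ 2)) ^ 2

lemma detR {p : P} (h : A p) : (p.1.1 : ℝ) * (p.2.2 : ℝ) - (p.1.2 : ℝ) * (p.2.1 : ℝ) = 1 := by
  have h5 := h.2.2.2.2
  have : ((p.1.1 * p.2.2 - p.1.2 * p.2.1 : ℤ) : ℝ) = 1 := by rw [h5]; norm_num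
  push_cast at this
  linarith

lemma dt_nonneg {p : P} (h : A p) : 0 ≤ dt p := by
  obtain ⟨h1, h2, h3, h4, _⟩ := h
  unfold dt
  have c1 : (0:ℝ) ≤ p.1.1 := by exact_mod_cast h1
  have c2 : (0:ℝ) ≤ p.1.2 := by exact_mod_cast h2
  have c3 : (0:ℝ) ≤ p.2.1 := by exact_mod_cast h3
  have c4 : (0:ℝ) ≤ p.2.2 := by exact_mod_cast h4
  nlinarith

lemma nrm_sq (v : ℤ × ℤ) : nrm v ^ 2 = (v.1 : ℝ) ^ 2 + (v.2 : ℝ) ^ 2 :=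
  Real.sq_sqrt (by positivity)

lemma nrm_nonneg (v : ℤ × ℤ) : 0 ≤ nrm v := Real.sqrt_nonneg _

lemma nrm_mul {p : P} (h : A p) : nrm p.1 * nrm p.2 = Real.sqrt (1 + dt p ^ 2) := by
  unfold nrm
  rw [← Real.sqrt_mul (by positivity)]
  congr 1
  have hd := detR h
  unfold dt
  nlinarith [hd]

lemma uu_eq {p : P} (h : A p) : uu p = nrm p.1 * nrm p.2 - dt p := by
  rw [uu, nrm_mul h]

-- norms squared ≥ 1
lemma one_le_nx {p : P} (h : A p) : 1 ≤ (p.1.1 : ℝ) ^ 2 + (p.1.2 : ℝ) ^ 2 := by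
  obtain ⟨h1, h2, h3, h4, h5⟩ := h
  have hx1 : 1 ≤ p.1.1 := by
    rcases (by omega : p.1.1 = 0 ∨ 1 ≤ p.1.1) with e | e
    · rw [e] at h5; nlinarith [mul_nonneg h2 h3]
    · exact e
  have : 1 ≤ p.1.1 ^ 2 + p.1.2 ^ 2 := by nlinarith [sq_nonneg p.1.2]
  exact_mod_cast this

lemma one_le_ny {p : P} (h : A p) : 1 ≤ (p.2.1 : ℝ) ^ 2 + (p.2.2 : ℝ) ^ 2 := by
  obtain ⟨h1, h2, h3, h4, h5⟩ := h
  have hy2 : 1 ≤ p.2.2 := by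
    rcases (by omega : p.2.2 = 0 ∨ 1 ≤ p.2.2) with e | e
    · rw [e] at h5; nlinarith [mul_nonneg h2 h3]
    · exact e
  have : 1 ≤ p.2.1 ^ 2 + p.2.2 ^ 2 := by nlinarith [sq_nonneg p.2.1]
  exact_mod_cast this

lemma dt_L (p : P) : dt (Lst p) = dt p + ((p.1.1 : ℝ) ^ 2 + (p.1.2 : ℝ) ^ 2) := by
  unfold dt Lst; push_cast; ring

lemma dt_R (p : P) : dt (Rst p) = dt p + ((p.2.1 : ℝ) ^ 2 + (p.2.2 : ℝ) ^ 2) := by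
  unfold dt Rst; push_cast; ring

noncomputable def cc (p : P) : ℝ :=
  Real.sqrt (((p.1.1 : ℝ) + (p.2.1 : ℝ)) ^ 2 + ((p.1.2 : ℝ) + (p.2.2 : ℝ)) ^ 2)

lemma cc_sq (p : P) : cc p ^ 2 = ((p.1.1 : ℝ) + (p.2.1 : ℝ)) ^ 2 + ((p.1.2 : ℝ) + (p.2.2 : ℝ)) ^ 2 :=
  Real.sq_sqrt (by positivity)

lemma cc_eq (p : P) : cc p = nrm (p.1.1 + p.2.1, p.1.2 + p.2.2) := by
  unfold cc nrm; push_cast; ring_nf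


lemma key_identity {p : P} (h : A p) : ff p = hh p - hh (Lst p) - hh (Rst p) := by
  have hL := A_L h
  have hR := A_R h
  have ha2 := nrm_sq p.1
  have hb2 := nrm_sq p.2
  have hc2 := cc_sq p
  have hu : uu p = nrm p.1 * nrm p.2 - dt p := uu_eq h
  have huL : uu (Lst p) = nrm p.1 * cc p - dt (Lst p) := by
    have := uu_eq hL
    rw [this, cc_eq]
    rfl
  have huR : uu (Rst p) = cc p * nrm p.2 - dt (Rst p) := by
    have := uu_eq hR
    rw [this, cc_eq]
    rfl
  have hdL := dt_L p
  have hdR := dt_R p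
  have hcab : cc p ^ 2 = nrm p.1 ^ 2 + nrm p.2 ^ 2 + 2 * dt p := by
    rw [hc2, ha2, hb2]; unfold dt; ring
  unfold ff hh
  rw [hu, huL, huR, hdL, hdR]
  have hcc : Real.sqrt (((p.1.1 : ℝ) + (p.2.1 : ℝ)) ^ 2 + ((p.1.2 : ℝ) + (p.2.2 : ℝ)) ^ 2) = cc p := rfl
  rw [hcc, ← ha2, ← hb2]
  linear_combination hcab

lemma uu_pos {p : P} (h : A p) : 0 < uu p := by
  have hd := dt_nonneg h
  have : dt p < Real.sqrt (1 + dt p ^ 2) := by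
    nlinarith [Real.sq_sqrt (by positivity : (0:ℝ) ≤ 1 + dt p ^ 2), Real.sqrt_nonneg (1 + dt p ^ 2)]
  unfold uu; linarith

lemma uu_le {p : P} (h : A p) {c : ℝ} (hc : 0 ≤ c) (hcd : c ≤ dt p) : uu p ≤ 1 / (1 + c) := by
  have hd := dt_nonneg h
  have hs : Real.sqrt (1 + dt p ^ 2) ^ 2 = 1 + dt p ^ 2 := Real.sq_sqrt (by positivity)
  have h1 : 1 ≤ Real.sqrt (1 + dt p ^ 2) := by
    nlinarith [Real.sqrt_nonneg (1 + dt p ^ 2)]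
  have hup : 0 < uu p := uu_pos h
  have key : uu p * (Real.sqrt (1 + dt p ^ 2) + dt p) = 1 := by
    unfold uu; nlinarith [hs]
  have hden : 1 + c ≤ Real.sqrt (1 + dt p ^ 2) + dt p := by linarith
  rw [le_div_iff₀ (by linarith : (0:ℝ) < 1 + c)]
  nlinarith [key, hden, hup]

lemma th_eq {p : P} (h : A p) : th p = π / 2 - Real.arctan (dt p) := by
  unfold th uu
  exact two_arctan_u (dt_nonneg h)

lemma th_add {p : P} (h : A p) : th p = th (Lst p) + th (Rst p) := by
  have hL := A_L h
  have hR := A_R h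
  rw [th_eq h, th_eq hL, th_eq hR, dt_L, dt_R]
  have hnx := one_le_nx h
  have hny := one_le_ny h
  have hd := dt_nonneg h
  have key : (dt p + ((p.1.1:ℝ)^2 + (p.1.2:ℝ)^2)) * (dt p + ((p.2.1:ℝ)^2 + (p.2.2:ℝ)^2))
      = 1 + dt p * ((dt p + ((p.1.1:ℝ)^2 + (p.1.2:ℝ)^2)) + (dt p + ((p.2.1:ℝ)^2 + (p.2.2:ℝ)^2))) := by
    have hdet := detR h
    unfold dt
    nlinarith [hdet]
  have := arctan_add_special hd (by linarith : (0:ℝ) < dt p + ((p.1.1:ℝ)^2 + (p.1.2:ℝ)^2))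
    (by linarith : (0:ℝ) < dt p + ((p.2.1:ℝ)^2 + (p.2.2:ℝ)^2)) key
  linarith

noncomputable def Gg : ℕ → P → ℝ
  | 0, p => hh p
  | n + 1, p => Gg n (Lst p) + Gg n (Rst p)

noncomputable def Th : ℕ → P → ℝ
  | 0, p => th p
  | n + 1, p => Th n (Lst p) + Th n (Rst p)

noncomputable def Ff : ℕ → P → ℝ
  | 0, _ => 0
  | n + 1, p => ff p + Ff n (Lst p) + Ff n (Rst p)

lemma Th_eq_th : ∀ n (p : P), A p → Th n p = th p := by
  intro n
  induction n with
  | zero => intro p _; rfl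
  | succ n ih =>
    intro p hp
    have := th_add hp
    simp only [Th, ih _ (A_L hp), ih _ (A_R hp)]
    linarith

lemma Ff_eq : ∀ n (p : P), A p → Ff n p = hh p - Gg n p := by
  intro n
  induction n with
  | zero => intro p _; simp [Ff, Gg]
  | succ n ih =>
    intro p hp
    have hk := key_identity hp
    simp only [Ff, Gg, ih _ (A_L hp), ih _ (A_R hp)]
    linarith

lemma Th_le_Gg : ∀ n (p : P), A p → Th n p ≤ Gg n p := by
  intro n
  induction n with
  | zero =>
    intro p hp
    simp only [Th, Gg, th, hh]
    have := arctan_le_self (le_of_lt (uu_pos hp))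
    linarith
  | succ n ih =>
    intro p hp
    simp only [Th, Gg]
    have h1 := ih _ (A_L hp)
    have h2 := ih _ (A_R hp)
    linarith

lemma Gg_nonneg : ∀ n (p : P), A p → 0 ≤ Gg n p := by
  intro n
  induction n with
  | zero => intro p hp; simp only [Gg, hh]; linarith [uu_pos hp]
  | succ n ih =>
    intro p hp
    simp only [Gg]
    linarith [ih _ (A_L hp), ih _ (A_R hp)]

lemma ff_nonneg (p : P) : 0 ≤ ff p := sq_nonneg _

lemma Gg_succ_le : ∀ n (p : P), A p → Gg (n + 1) p ≤ Gg n p := by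
  intro n
  induction n with
  | zero =>
    intro p hp
    have hk := key_identity hp
    have := ff_nonneg p
    simp only [Gg]
    linarith
  | succ n ih =>
    intro p hp
    show Gg (n + 1) (Lst p) + Gg (n + 1) (Rst p) ≤ Gg n (Lst p) + Gg n (Rst p)
    linarith [ih _ (A_L hp), ih _ (A_R hp)]

lemma Gg_le_hh (n : ℕ) (p : P) (hp : A p) : Gg n p ≤ hh p := by
  induction n with
  | zero => simp [Gg]
  | succ n ih => linarith [Gg_succ_le n p hp]

lemma GgB : ∀ n (p : P), A p → ∀ c : ℝ, 0 ≤ c → c ≤ dt p →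
    Gg n p ≤ Th n p + (1 / (1 + c + n)) ^ 2 * (1 / 3) * Gg n p := by
  intro n
  induction n with
  | zero =>
    intro p hp c hc hcd
    simp only [Th, Gg, th, hh, Nat.cast_zero, add_zero]
    have hu0 := uu_pos hp
    have hule : uu p ≤ 1 / (1 + c) := uu_le hp hc hcd
    have harc := sub_arctan_le_cube (le_of_lt hu0)
    have hc1 : (0:ℝ) < 1 + c := by linarith
    have hsq : uu p ^ 2 ≤ (1 / (1 + c)) ^ 2 := by
      apply sq_le_sq' <;> nlinarith
    nlinarith [hsq, harc, hu0]
  | succ n ih =>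
    intro p hp c hc hcd
    have hL := A_L hp
    have hR := A_R hp
    have hdl : c + 1 ≤ dt (Lst p) := by
      rw [dt_L]; linarith [one_le_nx hp]
    have hdr : c + 1 ≤ dt (Rst p) := by
      rw [dt_R]; linarith [one_le_ny hp]
    have i1 := ih _ hL (c + 1) (by linarith) hdl
    have i2 := ih _ hR (c + 1) (by linarith) hdr
    have hcast : (1 : ℝ) + (c + 1) + n = 1 + c + (n + 1 : ℕ) := by push_cast; ring
    rw [hcast] at i1 i2
    simp only [Gg, Th]
    linarith

lemma dt_root : dt root = 0 := by norm_num [dt, root]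

lemma hh_root : hh root = 2 := by
  have : uu root = 1 := by
    unfold uu
    rw [dt_root]
    norm_num
  unfold hh; rw [this]; norm_num

lemma th_root : th root = π / 2 := by
  rw [th_eq A_root, dt_root, Real.arctan_zero, sub_zero]

lemma Gg_root_lb (n : ℕ) : π / 2 ≤ Gg n root := by
  have h1 := Th_le_Gg n root A_root
  rw [Th_eq_th n root A_root, th_root] at h1
  exact h1

lemma Gg_root_ub (n : ℕ) : Gg n root ≤ π / 2 + 2 / 3 * (1 / (1 + n)) ^ 2 := by
  have h1 := GgB n root A_root 0 le_rfl (by rw [dt_root])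
  rw [Th_eq_th n root A_root, th_root] at h1
  have h2 : Gg n root ≤ 2 := by
    have := Gg_le_hh n root A_root
    rw [hh_root] at this
    exact this
  have h3 : (0:ℝ) < 1 + (n:ℝ) := by positivity
  have h4 : (0:ℝ) ≤ (1 / (1 + (n:ℝ))) ^ 2 := by positivity
  nlinarith [h1, h2, h4]

lemma Ff_root (n : ℕ) : Ff n root = 2 - Gg n root := by
  rw [Ff_eq n root A_root, hh_root]

lemma Ff_root_le (n : ℕ) : Ff n root ≤ 2 - π / 2 := by
  rw [Ff_root]; linarith [Gg_root_lb n]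

lemma Ff_tendsto : Filter.Tendsto (fun n => Ff n root) Filter.atTop (nhds (2 - π / 2)) := by
  have hb : ∀ n : ℕ, |Ff n root - (2 - π / 2)| ≤ 1 / ((n : ℝ) + 1) := by
    intro n
    have h1 := Gg_root_lb n
    have h2 := Gg_root_ub n
    rw [Ff_root]
    have h3 : (0:ℝ) < (n:ℝ) + 1 := by positivity
    rw [abs_le]
    constructor
    · have h5 : (1:ℝ) ≤ 1 + (n:ℝ) := by linarith [Nat.cast_nonneg (α := ℝ) n]
      have h6 : (1 / (1 + (n:ℝ))) ^ 2 ≤ 1 / (1 + (n:ℝ)) := by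
        rw [div_pow, one_pow]
        apply div_le_div_of_nonneg_left (by norm_num) (by positivity)
        nlinarith
      have h7 : (1:ℝ) + (n:ℝ) = (n:ℝ) + 1 := by ring
      have : 2 / 3 * (1 / (1 + (n:ℝ))) ^ 2 ≤ 1 / ((n:ℝ) + 1) := by
        rw [← h7]
        nlinarith [h6, (by positivity : (0:ℝ) ≤ (1 / (1 + (n:ℝ))) ^ 2)]
      linarith
    · have : (0:ℝ) ≤ 1 / ((n:ℝ) + 1) := by positivity
      linarith
  have hz : Filter.Tendsto (fun n : ℕ => 1 / ((n : ℝ) + 1)) Filter.atTop (nhds 0) :=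
    tendsto_one_div_add_atTop_nhds_zero_nat
  have : Filter.Tendsto (fun n => Ff n root - (2 - π / 2)) Filter.atTop (nhds 0) := by
    apply squeeze_zero_norm hb hz
  have := this.add_const (2 - π / 2)
  simpa using this

def N : List Bool → P → P
  | [], q => q
  | b :: v, q => N v (stp b q)

lemma N_append (v : List Bool) (b : Bool) (q : P) : N (v ++ [b]) q = stp b (N v q) := by
  induction v generalizing q with
  | nil => rfl
  | cons c w ih => simp only [List.cons_append, N]; exact ih (stp c q)

lemma A_N (v : List Bool) (q : P) (h : A q) : A (N v q) := by
  induction v generalizing q with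
  | nil => exact h
  | cons b w ih => exact ih _ (A_stp b h)

def sumc (p : P) : ℤ := p.1.1 + p.1.2 + p.2.1 + p.2.2

lemma sumc_stp {q : P} (b : Bool) (h : A q) : sumc q < sumc (stp b q) := by
  have hx := x_ne_zero h
  have hy := y_ne_zero h
  cases b <;> simp only [stp, cond, Lst, Rst, sumc] <;> omega

lemma sumc_N (v : List Bool) (q : P) (h : A q) : sumc q ≤ sumc (N v q) := by
  induction v generalizing q with
  | nil => exact le_refl _
  | cons b w ih =>
    have h1 := sumc_stp b h
    have h2 := ih _ (A_stp b h)
    simp only [N]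
    omega

-- cone invariant
def d2 (a b : ℤ × ℤ) : ℤ := a.1 * b.2 - a.2 * b.1

def InCone (u w : ℤ × ℤ) (p : P) : Prop :=
  0 ≤ d2 u p.1 ∧ 0 ≤ d2 p.1 w ∧ 0 ≤ d2 u p.2 ∧ 0 ≤ d2 p.2 w

lemma InCone_stp {u w : ℤ × ℤ} {p : P} (b : Bool) (h : InCone u w p) : InCone u w (stp b p) := by
  obtain ⟨h1, h2, h3, h4⟩ := h
  cases b <;>
    simp only [stp, cond, Lst, Rst, InCone, d2] at * <;>
    constructor <;> try constructor
  all_goals first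
    | (constructor <;> nlinarith)
    | nlinarith

lemma InCone_N (v : List Bool) {u w : ℤ × ℤ} {p : P} (h : InCone u w p) : InCone u w (N v p) := by
  induction v generalizing p with
  | nil => exact h
  | cons b v ih => exact ih (InCone_stp b h)

lemma parallel_contra {s a b : ℤ × ℤ} (hs1 : 0 ≤ s.1) (hs2 : 0 ≤ s.2)
    (hsne : s ≠ 0) (ha : d2 s a = 0) (hb : d2 s b = 0) (hab : d2 a b = 1) : False := by
  simp only [d2] at ha hb hab
  have hne : s.1 ≠ 0 ∨ s.2 ≠ 0 := by
    by_contra hc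
    push_neg at hc
    exact hsne (Prod.ext hc.1 hc.2)
  have k1 : s.1 * (a.1 * b.2 - a.2 * b.1) = 0 := by linear_combination a.1 * hb - b.1 * ha
  have k2 : s.2 * (a.1 * b.2 - a.2 * b.1) = 0 := by linear_combination a.2 * hb - b.2 * ha
  rw [hab] at k1 k2
  omega

lemma no_cross {q : P} (h : A q) (v v' : List Bool) : N v (Lst q) ≠ N v' (Rst q) := by
  intro heq
  set s : ℤ × ℤ := (q.1.1 + q.2.1, q.1.2 + q.2.2) with hs
  obtain ⟨h1, h2, h3, h4, h5⟩ := h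
  -- cone for left subtree : u = q.1, w = s
  have hc1 : InCone q.1 s (Lst q) := by
    simp only [InCone, Lst, d2, hs]
    refine ⟨by ring_nf; omega, by ring_nf; nlinarith, by ring_nf; nlinarith, by ring_nf; nlinarith⟩
  have hc2 : InCone s q.2 (Rst q) := by
    simp only [InCone, Rst, d2, hs]
    refine ⟨by ring_nf; nlinarith, by ring_nf; nlinarith, by ring_nf; nlinarith, by ring_nf; nlinarith⟩
  have hl := InCone_N v hc1
  have hr := InCone_N v' hc2
  rw [heq] at hl
  set p := N v' (Rst q) with hp
  have hA : A p := A_N v' _ (A_R ⟨h1, h2, h3, h4, h5⟩)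
  have flip1 : d2 p.1 s = -d2 s p.1 := by simp only [d2]; ring
  have flip2 : d2 p.2 s = -d2 s p.2 := by simp only [d2]; ring
  have e1 : d2 s p.1 = 0 := le_antisymm (by linarith [hl.2.1, flip1]) hr.1
  have e2 : d2 s p.2 = 0 := le_antisymm (by linarith [hl.2.2.2, flip2]) hr.2.2.1
  have hsne : s ≠ 0 := by
    intro hz
    rw [hs] at hz
    have z1 : q.1.1 + q.2.1 = 0 := congrArg Prod.fst hz
    have z2 : q.1.2 + q.2.2 = 0 := congrArg Prod.snd hz
    nlinarith [h5]
  exact parallel_contra (by simp [hs]; omega) (by simp [hs]; omega) hsne e1 e2 hA.2.2.2.2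

lemma N_ne_self {q : P} (h : A q) (b : Bool) (v : List Bool) : N (b :: v) q ≠ q := by
  intro heq
  have h1 := sumc_stp b h
  have h2 := sumc_N v _ (A_stp b h)
  simp only [N] at heq
  rw [heq] at h2
  omega

lemma Ninj : ∀ (v v' : List Bool) (q : P), A q → N v q = N v' q → v = v' := by
  intro v
  induction v with
  | nil =>
    intro v' q hq heq
    cases v' with
    | nil => rfl
    | cons b w => exact absurd (heq.symm) (N_ne_self hq b w)
  | cons b w ih =>
    intro v' q hq heq
    cases v' with
    | nil => exact absurd heq (N_ne_self hq b w)
    | cons b' w' =>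
      simp only [N] at heq
      cases b <;> cases b' <;> simp only [stp, cond] at heq
      · rw [ih w' _ (A_R hq) heq]
      · exact absurd heq.symm (no_cross hq w' w)
      · exact absurd heq (no_cross hq w w')
      · rw [ih w' _ (A_L hq) heq]

lemma comparable {p : P} (h : A p) (hne : p ≠ root) :
    (p.2.1 ≤ p.1.1 ∧ p.2.2 ≤ p.1.2) ∨ (p.1.1 ≤ p.2.1 ∧ p.1.2 ≤ p.2.2) := by
  obtain ⟨h1, h2, h3, h4, h5⟩ := h
  by_contra hc
  push_neg at hc
  obtain ⟨hc1, hc2⟩ := hc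
  rcases lt_or_ge p.1.1 p.2.1 with ha | ha
  · have hb : p.2.2 < p.1.2 := hc2 (le_of_lt ha)
    have t1 : p.1.1 * p.2.2 ≤ p.1.1 * (p.1.2 - 1) :=
      mul_le_mul_of_nonneg_left (by omega) h1
    have t2 : p.1.2 * (p.1.1 + 1) ≤ p.1.2 * p.2.1 :=
      mul_le_mul_of_nonneg_left (by omega) h2
    nlinarith [h5]
  · have hxy : p.1.2 < p.2.2 := hc1 ha
    rcases lt_or_ge p.2.1 p.1.1 with hstrict | hle
    · have t1 : (p.2.1 + 1) * (p.1.2 + 1) ≤ p.1.1 * p.2.2 :=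
        mul_le_mul (by omega) (by omega) (by omega) (by omega)
      have t2 : 0 ≤ p.1.2 * p.2.1 := mul_nonneg h2 h3
      have hk : p.2.1 + p.1.2 + 1 ≤ 1 := by nlinarith [h5]
      have hy1 : p.2.1 = 0 := by omega
      have hx2 : p.1.2 = 0 := by omega
      rw [hy1, hx2] at h5
      simp at h5
      rcases Int.mul_eq_one_iff_eq_one_or_neg_one.1 h5 with ⟨e1, e2⟩ | ⟨e1, e2⟩
      · exact hne (by
          apply Prod.ext <;> apply Prod.ext <;> simp [root, e1, e2, hy1, hx2])
      · omega
    · exact absurd (hc2 (by omega)) (by omega)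

lemma surj_aux : ∀ (n : ℕ) (p : P), A p → sumc p ≤ n → ∃ w : List Bool, N w root = p := by
  intro n
  induction n with
  | zero =>
    intro p hp hs
    exfalso
    have := x_ne_zero hp
    have := y_ne_zero hp
    simp only [sumc] at hs
    omega
  | succ n ih =>
    intro p hp hs
    rcases eq_or_ne p root with he | hne
    · exact ⟨[], he.symm⟩
    · rcases comparable hp hne with ⟨ha1, ha2⟩ | ⟨ha1, ha2⟩
      · -- y ≤ x : p = Rst q, q = (x - y, y)
        set q : P := ((p.1.1 - p.2.1, p.1.2 - p.2.2), p.2) with hq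
        obtain ⟨h1, h2, h3, h4, h5⟩ := hp
        have hAq : A q := by
          refine ⟨by simp [hq]; omega, by simp [hq]; omega, h3, h4, ?_⟩
          show (p.1.1 - p.2.1) * p.2.2 - (p.1.2 - p.2.2) * p.2.1 = 1
          linarith [h5]
        have hy := y_ne_zero hAq
        simp only [hq] at hy
        have hsq : sumc q ≤ n := by
          simp only [sumc, hq] at hs ⊢
          simp only [sumc] at *
          push_cast at *
          omega
        obtain ⟨w, hw⟩ := ih q hAq hsq
        refine ⟨w ++ [false], ?_⟩
        rw [N_append, hw]
        simp only [stp, cond, Rst, hq]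
        apply Prod.ext <;> apply Prod.ext <;> simp <;> omega
      · set q : P := (p.1, (p.2.1 - p.1.1, p.2.2 - p.1.2)) with hq
        obtain ⟨h1, h2, h3, h4, h5⟩ := hp
        have hAq : A q := by
          refine ⟨h1, h2, by simp [hq]; omega, by simp [hq]; omega, ?_⟩
          show p.1.1 * (p.2.2 - p.1.2) - p.1.2 * (p.2.1 - p.1.1) = 1
          linarith [h5]
        have hx := x_ne_zero hAq
        simp only [hq] at hx
        have hsq : sumc q ≤ n := by
          simp only [sumc, hq] at hs ⊢
          simp only [sumc] at *
          push_cast at *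
          omega
        obtain ⟨w, hw⟩ := ih q hAq hsq
        refine ⟨w ++ [true], ?_⟩
        rw [N_append, hw]
        simp only [stp, cond, Lst, hq]
        apply Prod.ext <;> apply Prod.ext <;> simp <;> omega

def Wn : ℕ → Finset (List Bool)
  | 0 => ∅
  | n + 1 => insert [] (((Wn n).image (List.cons true)) ∪ ((Wn n).image (List.cons false)))

lemma mem_Wn : ∀ (n : ℕ) (w : List Bool), w.length < n → w ∈ Wn n := by
  intro n
  induction n with
  | zero => intro w hw; omega
  | succ n ih =>
    intro w hw
    cases w with
    | nil => simp [Wn]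
    | cons b v =>
      simp only [List.length_cons] at hw
      have hv : v ∈ Wn n := ih v (by omega)
      cases b <;> simp [Wn] <;> exact hv

lemma sum_Wn : ∀ (n : ℕ) (q : P), (∑ w ∈ Wn n, ff (N w q)) = Ff n q := by
  intro n
  induction n with
  | zero => intro q; simp [Wn, Ff]
  | succ n ih =>
    intro q
    rw [show Wn (n+1) = insert [] (((Wn n).image (List.cons true)) ∪ ((Wn n).image (List.cons false))) from rfl]
    rw [Finset.sum_insert (by simp)]
    rw [Finset.sum_union (by
      rw [Finset.disjoint_left]
      intro a ha hb
      simp only [Finset.mem_image] at ha hb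
      obtain ⟨x, _, hx⟩ := ha
      obtain ⟨y, _, hy⟩ := hb
      rw [← hx] at hy
      simp at hy)]
    rw [Finset.sum_image (by intro x _ y _ hxy; simpa using hxy)]
    rw [Finset.sum_image (by intro x _ y _ hxy; simpa using hxy)]
    show ff (N [] q) + ((∑ w ∈ Wn n, ff (N (true :: w) q)) + ∑ w ∈ Wn n, ff (N (false :: w) q)) = Ff (n+1) q
    simp only [N, stp, cond]
    rw [ih (Lst q), ih (Rst q)]
    show ff q + (Ff n (Lst q) + Ff n (Rst q)) = Ff (n + 1) q
    simp only [Ff]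
    ring

lemma hasSum_g : HasSum (fun w : List Bool => ff (N w root)) (2 - π / 2) := by
  apply hasSum_of_isLUB_of_nonneg (2 - π / 2) (fun w => ff_nonneg _)
  constructor
  · rintro x ⟨S, rfl⟩
    set n := (S.sup fun w : List Bool => w.length) + 1 with hn
    have hsub : S ⊆ Wn n := by
      intro w hw
      apply mem_Wn
      have h2 : w.length ≤ S.sup fun w : List Bool => w.length := Finset.le_sup hw
      omega
    calc (∑ w ∈ S, ff (N w root)) ≤ ∑ w ∈ Wn n, ff (N w root) :=
          Finset.sum_le_sum_of_subset_of_nonneg hsub (fun i _ _ => ff_nonneg _)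
      _ = Ff n root := sum_Wn n root
      _ ≤ 2 - π / 2 := Ff_root_le n
  · intro b hb
    have hball : ∀ n, Ff n root ≤ b := by
      intro n
      rw [← sum_Wn n root]
      exact hb ⟨Wn n, rfl⟩
    exact le_of_tendsto Ff_tendsto (Filter.Eventually.of_forall hball)

noncomputable def eqv : List Bool ≃ {p : P // A p} :=
  Equiv.ofBijective (fun w => ⟨N w root, A_N w root A_root⟩)
    ⟨fun v v' h => Ninj v v' root A_root (congrArg Subtype.val h),
     fun p => by
       obtain ⟨w, hw⟩ := surj_aux (sumc p.1).toNat p.1 p.2 (Int.self_le_toNat _)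
       exact ⟨w, Subtype.ext hw⟩⟩

lemma main : (∑' p : {p : P // A p}, ff p.1) = 2 - π / 2 := by
  rw [← Equiv.tsum_eq eqv (fun p : {p : P // A p} => ff p.1)]
  exact hasSum_g.tsum_eq

end S9

theorem stmt9 :
    (∑' p : {p : (ℤ × ℤ) × (ℤ × ℤ) //
        0 ≤ p.1.1 ∧ 0 ≤ p.1.2 ∧ 0 ≤ p.2.1 ∧ 0 ≤ p.2.2 ∧
        p.1.1 * p.2.2 - p.1.2 * p.2.1 = 1},
      (Real.sqrt ((p.1.1.1 : ℝ) ^ 2 + (p.1.1.2 : ℝ) ^ 2)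
        + Real.sqrt ((p.1.2.1 : ℝ) ^ 2 + (p.1.2.2 : ℝ) ^ 2)
        - Real.sqrt (((p.1.1.1 : ℝ) + p.1.2.1) ^ 2 + ((p.1.1.2 : ℝ) + p.1.2.2) ^ 2)) ^ 2)
      = 2 - Real.pi / 2 :=
  S9.main
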